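/- arXiv:2406.16249 — 10 statements merged into one kernel-verified Lean document; each statement's English description precedes it below -/
import Mathlib

section
/- Let P and P̂ be row-stochastic matrices on a finite state space S such that every row satisfies ∑_{s'} min(P_{s,s'}, P̂_{s,s'}) ≥ 1 - ε/2 for some ε ∈ [0,2]. For probability vectors μ, μ̂ (rows of t-step distributions), if ∑_s min(μ_s, μ̂_s) ≥ c, then ∑_{s'} min((μP)_{s'}, (μ̂P̂)_{s'}) ≥ c·(1 - ε/2). In particular, the overlap of the t-step distributions starting from a common initial state is at least (1 - ε/2)^t. -/
lemma pow_stoch_aux {S : Type*} [Fintype S] [DecidableEq S]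
    (P : Matrix S S ℝ) (hP : ∀ s s', 0 ≤ P s s') (hProw : ∀ s, ∑ s', P s s' = 1) :
    ∀ t : ℕ, (∀ s s', 0 ≤ (P ^ t) s s') ∧ (∀ s, ∑ s', (P ^ t) s s' = 1) := by
  intro t
  induction t with
  | zero =>
    constructor
    · intro s s'
      simp [Matrix.one_apply]
      split <;> norm_num
    · intro s
      simp [Matrix.one_apply]
  | succ t ih =>
    have hentry : ∀ s s', (P ^ (t + 1)) s s' = ∑ k, (P ^ t) s k * P k s' := by
      intro s s'
      rw [pow_succ, Matrix.mul_apply]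
    constructor
    · intro s s'
      rw [hentry]
      exact Finset.sum_nonneg fun k _ => mul_nonneg (ih.1 s k) (hP k s')
    · intro s
      simp only [hentry]
      rw [Finset.sum_comm]
      calc ∑ k, ∑ s', (P ^ t) s k * P k s'
          = ∑ k, (P ^ t) s k * ∑ s', P k s' := by
            simp [Finset.mul_sum]
        _ = ∑ k, (P ^ t) s k := by simp [hProw]
        _ = 1 := ih.2 s

/-- Overlap propagation: one-step retention of overlap, and the t-step consequence. -/
theorem overlap_propagation {S : Type*} [Fintype S] [DecidableEq S]
    (P Phat : Matrix S S ℝ) (ε : ℝ) (hε0 : 0 ≤ ε) (hε2 : ε ≤ 2)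
    (hP : ∀ s s', 0 ≤ P s s') (hProw : ∀ s, ∑ s', P s s' = 1)
    (hPhat : ∀ s s', 0 ≤ Phat s s') (hPhatrow : ∀ s, ∑ s', Phat s s' = 1)
    (hover : ∀ s, 1 - ε / 2 ≤ ∑ s', min (P s s') (Phat s s')) :
    (∀ (μ μhat : S → ℝ) (c : ℝ),
        (∀ s, 0 ≤ μ s) → (∑ s, μ s = 1) →
        (∀ s, 0 ≤ μhat s) → (∑ s, μhat s = 1) →
        c ≤ ∑ s, min (μ s) (μhat s) →
        c * (1 - ε / 2) ≤
          ∑ s', min (∑ s, μ s * P s s') (∑ s, μhat s * Phat s s')) ∧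
    (∀ (t : ℕ) (s₀ : S),
        (1 - ε / 2) ^ t ≤ ∑ s, min ((P ^ t) s₀ s) ((Phat ^ t) s₀ s)) := by
  have hhalf : 0 ≤ 1 - ε / 2 := by linarith
  have key : ∀ (μ μhat : S → ℝ) (c : ℝ),
      (∀ s, 0 ≤ μ s) → (∑ s, μ s = 1) →
      (∀ s, 0 ≤ μhat s) → (∑ s, μhat s = 1) →
      c ≤ ∑ s, min (μ s) (μhat s) →
      c * (1 - ε / 2) ≤
        ∑ s', min (∑ s, μ s * P s s') (∑ s, μhat s * Phat s s') := by
    intro μ μhat c hμ0 _ hν0 _ hc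
    have hmin0 : ∀ s, 0 ≤ min (μ s) (μhat s) := fun s => le_min (hμ0 s) (hν0 s)
    have h1 : ∀ s', (∑ s, min (μ s) (μhat s) * min (P s s') (Phat s s')) ≤
        min (∑ s, μ s * P s s') (∑ s, μhat s * Phat s s') := by
      intro s'
      apply le_min
      · apply Finset.sum_le_sum
        intro s _
        exact mul_le_mul (min_le_left _ _) (min_le_left _ _)
          (le_min (hP s s') (hPhat s s')) (hμ0 s)
      · apply Finset.sum_le_sum
        intro s _
        exact mul_le_mul (min_le_right _ _) (min_le_right _ _)
          (le_min (hP s s') (hPhat s s')) (hν0 s)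
    calc c * (1 - ε / 2)
        ≤ (∑ s, min (μ s) (μhat s)) * (1 - ε / 2) :=
          mul_le_mul_of_nonneg_right hc hhalf
      _ = ∑ s, min (μ s) (μhat s) * (1 - ε / 2) := Finset.sum_mul _ _ _
      _ ≤ ∑ s, min (μ s) (μhat s) * (∑ s', min (P s s') (Phat s s')) := by
          apply Finset.sum_le_sum
          intro s _
          exact mul_le_mul_of_nonneg_left (hover s) (hmin0 s)
      _ = ∑ s', ∑ s, min (μ s) (μhat s) * min (P s s') (Phat s s') := by
          simp_rw [Finset.mul_sum]
          exact Finset.sum_comm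
      _ ≤ ∑ s', min (∑ s, μ s * P s s') (∑ s, μhat s * Phat s s') :=
          Finset.sum_le_sum fun s' _ => h1 s'
  refine ⟨key, ?_⟩
  intro t s₀
  induction t with
  | zero =>
    simp [Matrix.one_apply]
  | succ t ih =>
    have hPpow := pow_stoch_aux P hP hProw t
    have hQpow := pow_stoch_aux Phat hPhat hPhatrow t
    have hentry : ∀ s', (P ^ (t + 1)) s₀ s' = ∑ s, (P ^ t) s₀ s * P s s' := by
      intro s'; rw [pow_succ, Matrix.mul_apply]
    have hentry' : ∀ s', (Phat ^ (t + 1)) s₀ s' = ∑ s, (Phat ^ t) s₀ s * Phat s s' := by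
      intro s'; rw [pow_succ, Matrix.mul_apply]
    simp_rw [hentry, hentry', pow_succ]
    exact key (fun s => (P ^ t) s₀ s) (fun s => (Phat ^ t) s₀ s) ((1 - ε / 2) ^ t)
      (fun s => hPpow.1 s₀ s) (hPpow.2 s₀) (fun s => hQpow.1 s₀ s) (hQpow.2 s₀) ih
end

section
/- Let P, P̂ be row-stochastic matrices on a finite state space with every row satisfying ∑_{s'} min(P_{s,s'}, P̂_{s,s'}) ≥ 1 - ε_T/2, and let R, R̂ : S → [0,1] with ‖R - R̂‖_∞ ≤ ε_R. Fix γ ∈ [0,1) and define values V_s = ∑_{t=0}^∞ γ^t ⟨(P^t)_s, R⟩ and V̂_s = ∑_{t=0}^∞ γ^t ⟨(P̂^t)_s, R̂⟩. Then for all s, |V_s - V̂_s| ≤ 1/(1-γ) - (1-ε_R)/(1 - γ(1 - ε_T/2)). -/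
open Finset

/-- One-sided comparison of expectations under overlapping distributions. -/
lemma tsl_one_sided {S : Type*} [Fintype S] (p q R1 R2 : S → ℝ) (εR : ℝ)
    (hp : ∀ s, 0 ≤ p s) (hq : ∀ s, 0 ≤ q s)
    (hpsum : ∑ s, p s = 1)
    (hR1 : ∀ s, R1 s ≤ 1) (hR2 : ∀ s, 0 ≤ R2 s)
    (hd : ∀ s, R1 s - R2 s ≤ εR) :
    ∑ s, p s * R1 s - ∑ s, q s * R2 s
      ≤ 1 - (1 - εR) * ∑ s, min (p s) (q s) := by
  have key : ∑ s, p s * R1 s - ∑ s, q s * R2 s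
      = ∑ s, ((p s - min (p s) (q s)) * R1 s
          + min (p s) (q s) * (R1 s - R2 s)
          - (q s - min (p s) (q s)) * R2 s) := by
    rw [← Finset.sum_sub_distrib]
    congr 1
    ext s
    ring
  rw [key]
  have h1 : ∀ s : S, (p s - min (p s) (q s)) * R1 s
      + min (p s) (q s) * (R1 s - R2 s)
      - (q s - min (p s) (q s)) * R2 s
      ≤ (p s - min (p s) (q s)) + min (p s) (q s) * εR := by
    intro s
    have hm0 : 0 ≤ min (p s) (q s) := le_min (hp s) (hq s)
    have hpm : 0 ≤ p s - min (p s) (q s) := by simp [min_le_left]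
    have hqm : 0 ≤ q s - min (p s) (q s) := by simp [min_le_right]
    have t1 : (p s - min (p s) (q s)) * R1 s ≤ p s - min (p s) (q s) := by
      nlinarith [hR1 s]
    have t2 : min (p s) (q s) * (R1 s - R2 s) ≤ min (p s) (q s) * εR :=
      mul_le_mul_of_nonneg_left (hd s) hm0
    have t3 : 0 ≤ (q s - min (p s) (q s)) * R2 s := mul_nonneg hqm (hR2 s)
    linarith
  calc ∑ s, ((p s - min (p s) (q s)) * R1 s
          + min (p s) (q s) * (R1 s - R2 s)
          - (q s - min (p s) (q s)) * R2 s)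
      ≤ ∑ s, ((p s - min (p s) (q s)) + min (p s) (q s) * εR) :=
        Finset.sum_le_sum fun s _ => h1 s
    _ = 1 - (1 - εR) * ∑ s, min (p s) (q s) := by
        rw [Finset.sum_add_distrib, Finset.sum_sub_distrib, hpsum, ← Finset.sum_mul]
        ring

set_option maxHeartbeats 1200000 in
/-- Tight simulation lemma. -/
theorem tight_simulation_lemma {S : Type*} [Fintype S] [DecidableEq S]
    (P Phat : Matrix S S ℝ) (R Rhat : S → ℝ) (γ εT εR : ℝ)
    (hγ0 : 0 ≤ γ) (hγ1 : γ < 1)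
    (hεT0 : 0 ≤ εT) (hεT2 : εT ≤ 2) (hεR0 : 0 ≤ εR) (hεR1 : εR ≤ 1)
    (hP : ∀ s s', 0 ≤ P s s') (hProw : ∀ s, ∑ s', P s s' = 1)
    (hPhat : ∀ s s', 0 ≤ Phat s s') (hPhatrow : ∀ s, ∑ s', Phat s s' = 1)
    (hover : ∀ s, 1 - εT / 2 ≤ ∑ s', min (P s s') (Phat s s'))
    (hR : ∀ s, R s ∈ Set.Icc (0 : ℝ) 1) (hRhat : ∀ s, Rhat s ∈ Set.Icc (0 : ℝ) 1)
    (hRdiff : ∀ s, |R s - Rhat s| ≤ εR)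
    (V Vhat : S → ℝ)
    (hV : ∀ s, V s = ∑' t : ℕ, γ ^ t * ∑ s', (P ^ t) s s' * R s')
    (hVhat : ∀ s, Vhat s = ∑' t : ℕ, γ ^ t * ∑ s', (Phat ^ t) s s' * Rhat s') :
    ∀ s, |V s - Vhat s| ≤ 1 / (1 - γ) - (1 - εR) / (1 - γ * (1 - εT / 2)) := by
  set α := 1 - εT / 2 with hαdef
  have hα0 : 0 ≤ α := by simp only [hαdef]; linarith
  have hα1 : α ≤ 1 := by simp only [hαdef]; linarith
  -- nonnegativity and row-stochasticity of powers
  have hPpow : ∀ (t : ℕ) (s s' : S), 0 ≤ (P ^ t) s s' := by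
    intro t
    induction t with
    | zero => intro s s'; by_cases h : s = s' <;> simp [Matrix.one_apply, h]
    | succ n ih =>
      intro s s'
      rw [pow_succ, Matrix.mul_apply]
      exact Finset.sum_nonneg fun k _ => mul_nonneg (ih s k) (hP k s')
  have hPhatpow : ∀ (t : ℕ) (s s' : S), 0 ≤ (Phat ^ t) s s' := by
    intro t
    induction t with
    | zero => intro s s'; by_cases h : s = s' <;> simp [Matrix.one_apply, h]
    | succ n ih =>
      intro s s'
      rw [pow_succ, Matrix.mul_apply]
      exact Finset.sum_nonneg fun k _ => mul_nonneg (ih s k) (hPhat k s')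
  have hProwpow : ∀ (t : ℕ) (s : S), ∑ s', (P ^ t) s s' = 1 := by
    intro t
    induction t with
    | zero => intro s; simp [Matrix.one_apply]
    | succ n ih =>
      intro s
      simp only [pow_succ, Matrix.mul_apply]
      rw [Finset.sum_comm]
      calc ∑ k, ∑ s', (P ^ n) s k * P k s'
          = ∑ k, (P ^ n) s k * ∑ s', P k s' := by
            simp [Finset.mul_sum]
        _ = 1 := by simp [hProw, ih]
  have hPhatrowpow : ∀ (t : ℕ) (s : S), ∑ s', (Phat ^ t) s s' = 1 := by
    intro t
    induction t with
    | zero => intro s; simp [Matrix.one_apply]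
    | succ n ih =>
      intro s
      simp only [pow_succ, Matrix.mul_apply]
      rw [Finset.sum_comm]
      calc ∑ k, ∑ s', (Phat ^ n) s k * Phat k s'
          = ∑ k, (Phat ^ n) s k * ∑ s', Phat k s' := by
            simp [Finset.mul_sum]
        _ = 1 := by simp [hPhatrow, ih]
  -- overlap propagates through powers
  have hoverpow : ∀ (t : ℕ) (s : S),
      α ^ t ≤ ∑ s', min ((P ^ t) s s') ((Phat ^ t) s s') := by
    intro t
    induction t with
    | zero => intro s; simp [Matrix.one_apply]
    | succ n ih =>
      intro s
      have step1 : ∀ s'' : S,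
          ∑ k, min ((P ^ n) s k) ((Phat ^ n) s k) * min (P k s'') (Phat k s'')
            ≤ min ((P ^ (n+1)) s s'') ((Phat ^ (n+1)) s s'') := by
        intro s''
        apply le_min
        · rw [pow_succ, Matrix.mul_apply]
          apply Finset.sum_le_sum
          intro k _
          exact mul_le_mul (min_le_left _ _) (min_le_left _ _)
            (le_min (hP k s'') (hPhat k s'')) (hPpow n s k)
        · rw [pow_succ, Matrix.mul_apply]
          apply Finset.sum_le_sum
          intro k _
          exact mul_le_mul (min_le_right _ _) (min_le_right _ _)
            (le_min (hP k s'') (hPhat k s'')) (hPhatpow n s k)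
      calc α ^ (n+1) = α ^ n * α := pow_succ α n
        _ ≤ (∑ k, min ((P ^ n) s k) ((Phat ^ n) s k)) * α :=
            mul_le_mul_of_nonneg_right (ih s) hα0
        _ = ∑ k, min ((P ^ n) s k) ((Phat ^ n) s k) * α := by
            rw [Finset.sum_mul]
        _ ≤ ∑ k, min ((P ^ n) s k) ((Phat ^ n) s k)
              * ∑ s'', min (P k s'') (Phat k s'') := by
            apply Finset.sum_le_sum
            intro k _
            exact mul_le_mul_of_nonneg_left (hover k)
              (le_min (hPpow n s k) (hPhatpow n s k))
        _ = ∑ s'', ∑ k, min ((P ^ n) s k) ((Phat ^ n) s k)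
              * min (P k s'') (Phat k s'') := by
            simp only [Finset.mul_sum]
            rw [Finset.sum_comm]
        _ ≤ ∑ s'', min ((P ^ (n+1)) s s'') ((Phat ^ (n+1)) s s'') :=
            Finset.sum_le_sum fun s'' _ => step1 s''
  -- per-time-step bound
  have hstep : ∀ (t : ℕ) (s : S),
      |(∑ s', (P ^ t) s s' * R s') - (∑ s', (Phat ^ t) s s' * Rhat s')|
        ≤ 1 - (1 - εR) * α ^ t := by
    intro t s
    have hm : 1 - (1 - εR) * ∑ s', min ((P ^ t) s s') ((Phat ^ t) s s')
        ≤ 1 - (1 - εR) * α ^ t := by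
      have := mul_le_mul_of_nonneg_left (hoverpow t s) (by linarith : (0:ℝ) ≤ 1 - εR)
      linarith
    rw [abs_sub_le_iff]
    constructor
    · refine le_trans ?_ hm
      apply tsl_one_sided _ _ _ _ εR (hPpow t s) (hPhatpow t s) (hProwpow t s)
        (fun s' => (hR s').2) (fun s' => (hRhat s').1)
      intro s'
      exact le_trans (le_abs_self _) (hRdiff s')
    · have hm' : 1 - (1 - εR) * ∑ s', min ((Phat ^ t) s s') ((P ^ t) s s')
          ≤ 1 - (1 - εR) * α ^ t := by
        simp only [min_comm]
        exact hm
      refine le_trans ?_ hm'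
      apply tsl_one_sided _ _ _ _ εR (hPhatpow t s) (hPpow t s) (hPhatrowpow t s)
        (fun s' => (hRhat s').2) (fun s' => (hR s').1)
      intro s'
      have := hRdiff s'
      rw [abs_sub_comm] at this
      exact le_trans (le_abs_self _) this
  -- summabilities
  have hγα0 : 0 ≤ γ * α := mul_nonneg hγ0 hα0
  have hγα1 : γ * α < 1 := lt_of_le_of_lt (by nlinarith) hγ1
  have hsumγ : Summable (fun t : ℕ => γ ^ t) :=
    summable_geometric_of_lt_one hγ0 hγ1
  have hsumγα : Summable (fun t : ℕ => (γ * α) ^ t) :=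
    summable_geometric_of_lt_one hγα0 hγα1
  have hsumg : Summable (fun t : ℕ => γ ^ t - (1 - εR) * (γ * α) ^ t) :=
    hsumγ.sub (hsumγα.mul_left _)
  have habound : ∀ (t : ℕ) (s : S), ∑ s', (P ^ t) s s' * R s' ∈ Set.Icc (0:ℝ) 1 := by
    intro t s
    constructor
    · exact Finset.sum_nonneg fun s' _ => mul_nonneg (hPpow t s s') (hR s').1
    · calc ∑ s', (P ^ t) s s' * R s' ≤ ∑ s', (P ^ t) s s' :=
            Finset.sum_le_sum fun s' _ => by nlinarith [hPpow t s s', (hR s').1, (hR s').2]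
        _ = 1 := hProwpow t s
  have hbbound : ∀ (t : ℕ) (s : S), ∑ s', (Phat ^ t) s s' * Rhat s' ∈ Set.Icc (0:ℝ) 1 := by
    intro t s
    constructor
    · exact Finset.sum_nonneg fun s' _ => mul_nonneg (hPhatpow t s s') (hRhat s').1
    · calc ∑ s', (Phat ^ t) s s' * Rhat s' ≤ ∑ s', (Phat ^ t) s s' :=
            Finset.sum_le_sum fun s' _ => by
              nlinarith [hPhatpow t s s', (hRhat s').1, (hRhat s').2]
        _ = 1 := hPhatrowpow t s
  intro s
  have hsuma : Summable (fun t : ℕ => γ ^ t * ∑ s', (P ^ t) s s' * R s') := by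
    apply Summable.of_nonneg_of_le
      (fun t => mul_nonneg (pow_nonneg hγ0 t) (habound t s).1)
      (fun t => ?_) hsumγ
    nlinarith [pow_nonneg hγ0 t, (habound t s).2]
  have hsumb : Summable (fun t : ℕ => γ ^ t * ∑ s', (Phat ^ t) s s' * Rhat s') := by
    apply Summable.of_nonneg_of_le
      (fun t => mul_nonneg (pow_nonneg hγ0 t) (hbbound t s).1)
      (fun t => ?_) hsumγ
    nlinarith [pow_nonneg hγ0 t, (hbbound t s).2]
  have hdle : ∀ t : ℕ,
      |γ ^ t * ∑ s', (P ^ t) s s' * R s' - γ ^ t * ∑ s', (Phat ^ t) s s' * Rhat s'|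
        ≤ γ ^ t - (1 - εR) * (γ * α) ^ t := by
    intro t
    rw [← mul_sub, abs_mul, abs_of_nonneg (pow_nonneg hγ0 t)]
    have := mul_le_mul_of_nonneg_left (hstep t s) (pow_nonneg hγ0 t)
    calc γ ^ t * |(∑ s', (P ^ t) s s' * R s') - ∑ s', (Phat ^ t) s s' * Rhat s'|
        ≤ γ ^ t * (1 - (1 - εR) * α ^ t) := this
      _ = γ ^ t - (1 - εR) * (γ * α) ^ t := by rw [mul_pow]; ring
  have hsumabs : Summable (fun t : ℕ =>
      |γ ^ t * ∑ s', (P ^ t) s s' * R s' - γ ^ t * ∑ s', (Phat ^ t) s s' * Rhat s'|) :=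
    Summable.of_nonneg_of_le (fun t => abs_nonneg _) hdle hsumg
  have hsumd : Summable (fun t : ℕ =>
      γ ^ t * ∑ s', (P ^ t) s s' * R s' - γ ^ t * ∑ s', (Phat ^ t) s s' * Rhat s') :=
    hsuma.sub hsumb
  rw [hV, hVhat, ← Summable.tsum_sub hsuma hsumb]
  calc |∑' t : ℕ, (γ ^ t * ∑ s', (P ^ t) s s' * R s'
          - γ ^ t * ∑ s', (Phat ^ t) s s' * Rhat s')|
      ≤ ∑' t : ℕ, |γ ^ t * ∑ s', (P ^ t) s s' * R s'
          - γ ^ t * ∑ s', (Phat ^ t) s s' * Rhat s'| := by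
        have := norm_tsum_le_tsum_norm
          (f := fun t : ℕ => γ ^ t * ∑ s', (P ^ t) s s' * R s'
            - γ ^ t * ∑ s', (Phat ^ t) s s' * Rhat s')
          (by simpa [Real.norm_eq_abs] using hsumabs)
        simpa [Real.norm_eq_abs] using this
    _ ≤ ∑' t : ℕ, (γ ^ t - (1 - εR) * (γ * α) ^ t) :=
        Summable.tsum_le_tsum hdle hsumabs hsumg
    _ = (∑' t : ℕ, γ ^ t) - (1 - εR) * ∑' t : ℕ, (γ * α) ^ t := by
        rw [Summable.tsum_sub hsumγ (hsumγα.mul_left _), tsum_mul_left]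
    _ = 1 / (1 - γ) - (1 - εR) / (1 - γ * α) := by
        rw [tsum_geometric_of_lt_one hγ0 hγ1, tsum_geometric_of_lt_one hγα0 hγα1]
        rw [one_div, div_eq_mul_inv]
    _ = 1 / (1 - γ) - (1 - εR) / (1 - γ * (1 - εT / 2)) := by rw [hαdef]
end

section
/- Under the hypotheses of the tight simulation lemma (rows of P, P̂ within L1 distance ε_T, rewards in [0,1] within sup-distance ε_R, discount γ ∈ [0,1)), the classical simulation lemma holds: for all states s, |V_s - V̂_s| ≤ ε_R/(1-γ) + γ·ε_T/(2(1-γ)²). -/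
set_option maxHeartbeats 1000000

lemma simlem_pow_nonneg {S : Type*} [Fintype S] [DecidableEq S]
    (P : Matrix S S ℝ) (hP : ∀ s s', 0 ≤ P s s') (t : ℕ) :
    ∀ s s', 0 ≤ (P ^ t) s s' := by
  induction t with
  | zero => intro s s'; simp [Matrix.one_apply]; split <;> norm_num
  | succ n ih =>
    intro s s'
    rw [pow_succ, Matrix.mul_apply]
    exact Finset.sum_nonneg fun k _ => mul_nonneg (ih s k) (hP k s')

lemma simlem_pow_rowsum {S : Type*} [Fintype S] [DecidableEq S]
    (P : Matrix S S ℝ) (hProw : ∀ s, ∑ s', P s s' = 1) (t : ℕ) :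
    ∀ s, ∑ s', (P ^ t) s s' = 1 := by
  induction t with
  | zero => intro s; simp [Matrix.one_apply]
  | succ n ih =>
    intro s
    simp only [pow_succ, Matrix.mul_apply]
    rw [Finset.sum_comm]
    simp_rw [← Finset.mul_sum, hProw, mul_one]
    exact ih s

lemma simlem_pow_L1 {S : Type*} [Fintype S] [DecidableEq S]
    (P Phat : Matrix S S ℝ) (εT : ℝ)
    (hP : ∀ s s', 0 ≤ P s s') (hProw : ∀ s, ∑ s', P s s' = 1)
    (hPhat : ∀ s s', 0 ≤ Phat s s') (hPhatrow : ∀ s, ∑ s', Phat s s' = 1)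
    (hTdiff : ∀ s, ∑ s', |P s s' - Phat s s'| ≤ εT) (t : ℕ) :
    ∀ s, ∑ s', |(P ^ t) s s' - (Phat ^ t) s s'| ≤ t * εT := by
  induction t with
  | zero => intro s; simp
  | succ n ih =>
    intro s
    have key : ∀ s', |(P ^ (n+1)) s s' - (Phat ^ (n+1)) s s'|
        ≤ ∑ k, (|(P ^ n) s k - (Phat ^ n) s k| * P k s'
            + (Phat ^ n) s k * |P k s' - Phat k s'|) := by
      intro s'
      have hdecomp : (P ^ (n+1)) s s' - (Phat ^ (n+1)) s s'
          = ∑ k, (((P ^ n) s k - (Phat ^ n) s k) * P k s'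
              + (Phat ^ n) s k * (P k s' - Phat k s')) := by
        simp only [pow_succ, Matrix.mul_apply, ← Finset.sum_sub_distrib]
        congr 1; ext k; ring
      rw [hdecomp]
      refine (Finset.abs_sum_le_sum_abs _ _).trans (Finset.sum_le_sum fun k _ => ?_)
      refine (abs_add_le _ _).trans (add_le_add ?_ ?_)
      · rw [abs_mul, abs_of_nonneg (hP k s')]
      · rw [abs_mul, abs_of_nonneg (simlem_pow_nonneg Phat hPhat n s k)]
    calc ∑ s', |(P ^ (n+1)) s s' - (Phat ^ (n+1)) s s'|
        ≤ ∑ s', ∑ k, (|(P ^ n) s k - (Phat ^ n) s k| * P k s'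
            + (Phat ^ n) s k * |P k s' - Phat k s'|) :=
          Finset.sum_le_sum fun s' _ => key s'
      _ = ∑ k, (|(P ^ n) s k - (Phat ^ n) s k| * ∑ s', P k s'
            + (Phat ^ n) s k * ∑ s', |P k s' - Phat k s'|) := by
          rw [Finset.sum_comm]
          congr 1; ext k
          rw [Finset.sum_add_distrib, ← Finset.mul_sum, ← Finset.mul_sum]
      _ ≤ ∑ k, (|(P ^ n) s k - (Phat ^ n) s k| * 1 + (Phat ^ n) s k * εT) := by
          refine Finset.sum_le_sum fun k _ => add_le_add ?_ ?_
          · rw [hProw k]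
          · exact mul_le_mul_of_nonneg_left (hTdiff k) (simlem_pow_nonneg Phat hPhat n s k)
      _ = (∑ k, |(P ^ n) s k - (Phat ^ n) s k|) + εT := by
          rw [Finset.sum_add_distrib]
          simp_rw [mul_one]
          rw [← Finset.sum_mul, simlem_pow_rowsum Phat hPhatrow n s, one_mul]
      _ ≤ n * εT + εT := add_le_add (ih s) le_rfl
      _ = (↑(n+1)) * εT := by push_cast; ring

lemma simlem_half_L1 {S : Type*} [Fintype S] [DecidableEq S]
    (p q R : S → ℝ) (hpq : ∑ s, p s = ∑ s, q s)
    (hR : ∀ s, R s ∈ Set.Icc (0 : ℝ) 1) :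
    |∑ s, (p s - q s) * R s| ≤ (∑ s, |p s - q s|) / 2 := by
  have h1 : ∑ s, (p s - q s) * R s = ∑ s, (p s - q s) * (R s - 1/2) := by
    have : ∑ s, (p s - q s) * (1/2 : ℝ) = 0 := by
      rw [← Finset.sum_mul, Finset.sum_sub_distrib, hpq]; ring
    rw [← sub_eq_zero]
    rw [← Finset.sum_sub_distrib]
    simp_rw [← mul_sub, sub_sub_cancel]
    exact this
  rw [h1]
  refine (Finset.abs_sum_le_sum_abs _ _).trans ?_
  rw [Finset.sum_div]
  refine Finset.sum_le_sum fun s _ => ?_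
  rw [abs_mul]
  have h2 : |R s - 1/2| ≤ 1/2 := by
    rcases hR s with ⟨h0, h1'⟩
    rw [abs_le]; constructor <;> linarith
  calc |p s - q s| * |R s - 1/2| ≤ |p s - q s| * (1/2) :=
        mul_le_mul_of_nonneg_left h2 (abs_nonneg _)
    _ = |p s - q s| / 2 := by ring

/-- Classical simulation lemma. -/
theorem classical_simulation_lemma {S : Type*} [Fintype S] [DecidableEq S]
    (P Phat : Matrix S S ℝ) (R Rhat : S → ℝ) (γ εT εR : ℝ)
    (hγ0 : 0 ≤ γ) (hγ1 : γ < 1)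
    (hP : ∀ s s', 0 ≤ P s s') (hProw : ∀ s, ∑ s', P s s' = 1)
    (hPhat : ∀ s s', 0 ≤ Phat s s') (hPhatrow : ∀ s, ∑ s', Phat s s' = 1)
    (hTdiff : ∀ s, ∑ s', |P s s' - Phat s s'| ≤ εT)
    (hR : ∀ s, R s ∈ Set.Icc (0 : ℝ) 1) (hRhat : ∀ s, Rhat s ∈ Set.Icc (0 : ℝ) 1)
    (hRdiff : ∀ s, |R s - Rhat s| ≤ εR)
    (V Vhat : S → ℝ)
    (hV : ∀ s, V s = ∑' t : ℕ, γ ^ t * ∑ s', (P ^ t) s s' * R s')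
    (hVhat : ∀ s, Vhat s = ∑' t : ℕ, γ ^ t * ∑ s', (Phat ^ t) s s' * Rhat s') :
    ∀ s, |V s - Vhat s| ≤ εR / (1 - γ) + γ * εT / (2 * (1 - γ) ^ 2) := by
  intro s
  have hεR : 0 ≤ εR := le_trans (abs_nonneg _) (hRdiff s)
  have hεT : 0 ≤ εT :=
    le_trans (Finset.sum_nonneg fun _ _ => abs_nonneg _) (hTdiff s)
  have h1γ : 0 < 1 - γ := by linarith
  set a : ℕ → ℝ := fun t => γ ^ t * ∑ s', (P ^ t) s s' * R s' with ha_def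
  set b : ℕ → ℝ := fun t => γ ^ t * ∑ s', (Phat ^ t) s s' * Rhat s' with hb_def
  have hgeom : Summable fun t : ℕ => γ ^ t := summable_geometric_of_lt_one hγ0 hγ1
  have habs_pow : |γ| = γ := abs_of_nonneg hγ0
  have hsum_bound : ∀ (Q : Matrix S S ℝ) (hQ : ∀ s s', 0 ≤ Q s s')
      (hQrow : ∀ s, ∑ s', Q s s' = 1) (W : S → ℝ) (hW : ∀ s, W s ∈ Set.Icc (0:ℝ) 1)
      (t : ℕ), |∑ s', (Q ^ t) s s' * W s'| ≤ 1 := by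
    intro Q hQ hQrow W hW t
    have h0 : 0 ≤ ∑ s', (Q ^ t) s s' * W s' :=
      Finset.sum_nonneg fun s' _ =>
        mul_nonneg (simlem_pow_nonneg Q hQ t s s') (hW s').1
    have h1 : ∑ s', (Q ^ t) s s' * W s' ≤ 1 := by
      calc ∑ s', (Q ^ t) s s' * W s' ≤ ∑ s', (Q ^ t) s s' * 1 :=
            Finset.sum_le_sum fun s' _ =>
              mul_le_mul_of_nonneg_left (hW s').2 (simlem_pow_nonneg Q hQ t s s')
        _ = 1 := by simp [simlem_pow_rowsum Q hQrow t s]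
    rw [abs_of_nonneg h0]; exact h1
  have hsa : Summable a := by
    refine Summable.of_norm_bounded hgeom fun t => ?_
    rw [Real.norm_eq_abs, ha_def, abs_mul, abs_pow, habs_pow]
    nth_rewrite 2 [← mul_one (γ ^ t)]
    exact mul_le_mul_of_nonneg_left (hsum_bound P hP hProw R hR t) (pow_nonneg hγ0 t)
  have hsb : Summable b := by
    refine Summable.of_norm_bounded hgeom fun t => ?_
    rw [Real.norm_eq_abs, hb_def, abs_mul, abs_pow, habs_pow]
    nth_rewrite 2 [← mul_one (γ ^ t)]
    exact mul_le_mul_of_nonneg_left (hsum_bound Phat hPhat hPhatrow Rhat hRhat t)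
      (pow_nonneg hγ0 t)
  have hdiff : V s - Vhat s = ∑' t : ℕ, (a t - b t) := by
    rw [hV s, hVhat s, ← Summable.tsum_sub hsa hsb]
  -- pointwise bound
  have hterm : ∀ t : ℕ, |a t - b t| ≤ γ ^ t * εR + (t : ℝ) * γ ^ t * (εT / 2) := by
    intro t
    have hsplit : a t - b t
        = γ ^ t * ((∑ s', (P ^ t) s s' * (R s' - Rhat s'))
            + ∑ s', ((P ^ t) s s' - (Phat ^ t) s s') * Rhat s') := by
      rw [ha_def, hb_def]
      simp only [← mul_sub]
      congr 1
      rw [← Finset.sum_add_distrib, ← Finset.sum_sub_distrib]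
      congr 1; ext s'; ring
    have h1 : |∑ s', (P ^ t) s s' * (R s' - Rhat s')| ≤ εR := by
      refine (Finset.abs_sum_le_sum_abs _ _).trans ?_
      calc ∑ s', |(P ^ t) s s' * (R s' - Rhat s')|
          ≤ ∑ s', (P ^ t) s s' * εR := by
            refine Finset.sum_le_sum fun s' _ => ?_
            rw [abs_mul, abs_of_nonneg (simlem_pow_nonneg P hP t s s')]
            exact mul_le_mul_of_nonneg_left (hRdiff s') (simlem_pow_nonneg P hP t s s')
        _ = εR := by rw [← Finset.sum_mul, simlem_pow_rowsum P hProw t s, one_mul]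
    have h2 : |∑ s', ((P ^ t) s s' - (Phat ^ t) s s') * Rhat s'|
        ≤ (t : ℝ) * εT / 2 := by
      have := simlem_half_L1 (fun s' => (P ^ t) s s') (fun s' => (Phat ^ t) s s')
        Rhat (by rw [simlem_pow_rowsum P hProw t s, simlem_pow_rowsum Phat hPhatrow t s])
        hRhat
      refine this.trans ?_
      have := simlem_pow_L1 P Phat εT hP hProw hPhat hPhatrow hTdiff t s
      linarith
    calc |a t - b t| = γ ^ t * |(∑ s', (P ^ t) s s' * (R s' - Rhat s'))
            + ∑ s', ((P ^ t) s s' - (Phat ^ t) s s') * Rhat s'| := by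
          rw [hsplit, abs_mul, abs_pow, habs_pow]
      _ ≤ γ ^ t * (εR + (t : ℝ) * εT / 2) := by
          refine mul_le_mul_of_nonneg_left ?_ (pow_nonneg hγ0 t)
          exact (abs_add_le _ _).trans (add_le_add h1 h2)
      _ = γ ^ t * εR + (t : ℝ) * γ ^ t * (εT / 2) := by ring
  -- summability of the bound
  have hnγ : ‖γ‖ < 1 := by rw [Real.norm_eq_abs, habs_pow]; exact hγ1
  have hcoe : Summable fun t : ℕ => (t : ℝ) * γ ^ t := by
    have h := summable_pow_mul_geometric_of_norm_lt_one (k := 1) (r := γ) hnγ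
    simpa using h
  have hg : Summable fun t : ℕ => γ ^ t * εR + (t : ℝ) * γ ^ t * (εT / 2) :=
    (hgeom.mul_right εR).add (hcoe.mul_right (εT / 2))
  have hsd : Summable fun t => |a t - b t| :=
    Summable.of_nonneg_of_le (fun t => abs_nonneg _) hterm hg
  have habs : |V s - Vhat s| ≤ ∑' t : ℕ, (γ ^ t * εR + (t : ℝ) * γ ^ t * (εT / 2)) := by
    rw [hdiff]
    calc |∑' t : ℕ, (a t - b t)| ≤ ∑' t : ℕ, |a t - b t| := by
          have h := norm_tsum_le_tsum_norm (f := fun t => a t - b t)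
            (by simpa only [Real.norm_eq_abs] using hsd)
          simpa only [Real.norm_eq_abs] using h
      _ ≤ ∑' t : ℕ, (γ ^ t * εR + (t : ℝ) * γ ^ t * (εT / 2)) :=
          Summable.tsum_le_tsum hterm hsd hg
  refine habs.trans ?_
  rw [Summable.tsum_add (hgeom.mul_right εR) (hcoe.mul_right (εT / 2)),
    tsum_mul_right, tsum_mul_right, tsum_geometric_of_lt_one hγ0 hγ1,
    tsum_coe_mul_geometric_of_norm_lt_one hnγ]
  apply le_of_eq
  have hne : (1 : ℝ) - γ ≠ 0 := ne_of_gt h1γ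
  field_simp
end

section
/- The tight bound is at most the classical bound: for all γ ∈ [0,1), ε_T ∈ [0,2], ε_R ∈ [0,1], we have 1/(1-γ) - (1-ε_R)/(1 - γ(1-ε_T/2)) ≤ ε_R/(1-γ) + γ·ε_T/(2(1-γ)²). -/
/-- The tight bound is at most the classical bound. -/
theorem tight_le_classical (γ εT εR : ℝ)
    (hγ0 : 0 ≤ γ) (hγ1 : γ < 1)
    (hεT0 : 0 ≤ εT) (hεT2 : εT ≤ 2) (hεR0 : 0 ≤ εR) (hεR1 : εR ≤ 1) :
    1 / (1 - γ) - (1 - εR) / (1 - γ * (1 - εT / 2)) ≤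
      εR / (1 - γ) + γ * εT / (2 * (1 - γ) ^ 2) := by
  have h1 : (0:ℝ) < 1 - γ := by linarith
  have h2 : (0:ℝ) < 1 - γ * (1 - εT / 2) := by nlinarith
  have hD : 1 - γ ≤ 1 - γ * (1 - εT / 2) := by nlinarith
  have key : 1 / (1 - γ) - (1 - εR) / (1 - γ * (1 - εT / 2))
      = εR / (1 - γ * (1 - εT / 2)) + γ * εT / (2 * (1 - γ) * (1 - γ * (1 - εT / 2))) := by
    rw [div_sub_div _ _ h1.ne' h2.ne', div_add_div _ _ h2.ne' (by positivity), div_eq_div_iff (by positivity) (by positivity)]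
    ring
  rw [key]
  have t1 : εR / (1 - γ * (1 - εT / 2)) ≤ εR / (1 - γ) :=
    div_le_div_of_nonneg_left hεR0 h1 hD
  have t2 : γ * εT / (2 * (1 - γ) * (1 - γ * (1 - εT / 2))) ≤ γ * εT / (2 * (1 - γ) ^ 2) := by
    apply div_le_div_of_nonneg_left (by positivity) (by positivity)
    nlinarith
  linarith
end

section
/- The tight simulation-lemma bound is achieved: there exist two 2-state Markov reward processes (P, R) and (P̂, R̂) with ‖P_s - P̂_s‖₁ ≤ ε_T and ‖R - R̂‖_∞ ≤ ε_R for all s, whose values at state 1 satisfy V_1 - V̂_1 = 1/(1-γ) - (1-ε_R)/(1 - γ(1-ε_T/2)). Concretely: both states are absorbing in P with R(1)=1, R(2)=0; in P̂, state 1 transitions to state 2 with probability ε_T/2 and to itself with probability 1-ε_T/2, state 2 is absorbing, and R̂(1)=1-ε_R, R̂(2)=0. -/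
lemma pow_upper (a : ℝ) (t : ℕ) :
    (!![a, 1 - a; 0, 1] : Matrix (Fin 2) (Fin 2) ℝ) ^ t = !![a ^ t, 1 - a ^ t; 0, 1] := by
  induction t with
  | zero => simp [Matrix.one_fin_two]
  | succ n ih =>
      rw [pow_succ, ih]
      ext i j
      fin_cases i <;> fin_cases j <;>
        simp [Matrix.mul_apply, Fin.sum_univ_two, pow_succ] <;> ring

/-- The tight simulation-lemma bound is achieved by an explicit pair of 2-state MRPs. -/
theorem tight_bound_achieved (γ εT εR : ℝ)
    (hγ0 : 0 ≤ γ) (hγ1 : γ < 1)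
    (hεT0 : 0 ≤ εT) (hεT2 : εT ≤ 2) (hεR0 : 0 ≤ εR) (hεR1 : εR ≤ 1) :
    ∃ (P Phat : Matrix (Fin 2) (Fin 2) ℝ) (R Rhat : Fin 2 → ℝ),
      (∀ s s', 0 ≤ P s s') ∧ (∀ s, ∑ s', P s s' = 1) ∧
      (∀ s s', 0 ≤ Phat s s') ∧ (∀ s, ∑ s', Phat s s' = 1) ∧
      (∀ s, ∑ s', |P s s' - Phat s s'| ≤ εT) ∧
      (∀ s, |R s - Rhat s| ≤ εR) ∧
      P = 1 ∧ Phat = !![1 - εT / 2, εT / 2; 0, 1] ∧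
      R = ![1, 0] ∧ Rhat = ![1 - εR, 0] ∧
      (∑' t : ℕ, γ ^ t * ∑ s', (P ^ t) 0 s' * R s') -
          (∑' t : ℕ, γ ^ t * ∑ s', (Phat ^ t) 0 s' * Rhat s') =
        1 / (1 - γ) - (1 - εR) / (1 - γ * (1 - εT / 2)) := by
  set a : ℝ := 1 - εT / 2 with ha
  have ha0 : 0 ≤ a := by simp [ha]; linarith
  have ha1 : a ≤ 1 := by simp [ha]; linarith
  refine ⟨1, !![a, 1 - a; 0, 1], ![1, 0], ![1 - εR, 0], ?_, ?_, ?_, ?_, ?_, ?_, rfl, ?_, rfl, rfl, ?_⟩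
  · intro s s'
    by_cases h : s = s' <;> simp [Matrix.one_apply, h]
  · intro s; fin_cases s <;> simp [Fin.sum_univ_two, Matrix.one_apply]
  · intro s s'
    fin_cases s <;> fin_cases s' <;> simp <;> linarith
  · intro s; fin_cases s <;> simp [Fin.sum_univ_two]
  · intro s
    fin_cases s <;> simp [Fin.sum_univ_two, Matrix.one_apply, ha]
    · rw [abs_of_nonneg (by linarith : (0:ℝ) ≤ εT/2)]; linarith
    · linarith
  · intro s
    fin_cases s <;> simp
    · rw [abs_of_nonneg hεR0]
    · exact hεR0
  · congr 1 <;> simp [ha] <;> ring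
  · have h1 : (∑' t : ℕ, γ ^ t * ∑ s', ((1 : Matrix (Fin 2) (Fin 2) ℝ) ^ t) 0 s' * ![(1:ℝ), 0] s')
        = ∑' t : ℕ, γ ^ t := by
      refine tsum_congr fun t => ?_
      simp [Fin.sum_univ_two, Matrix.one_apply]
    have haγ : γ * a < 1 := by
      rcases eq_or_lt_of_le hγ0 with h | h
      · rw [← h]; norm_num
      · calc γ * a ≤ γ * 1 := by nlinarith
          _ < 1 := by linarith
    have haγ0 : 0 ≤ γ * a := mul_nonneg hγ0 ha0
    have h2 : (∑' t : ℕ, γ ^ t * ∑ s', ((!![a, 1 - a; 0, 1] : Matrix (Fin 2) (Fin 2) ℝ) ^ t) 0 s' * ![1 - εR, 0] s')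
        = ∑' t : ℕ, (1 - εR) * (γ * a) ^ t := by
      refine tsum_congr fun t => ?_
      rw [pow_upper]
      simp [Fin.sum_univ_two, mul_pow]
      ring
    rw [h1, h2, tsum_geometric_of_lt_one hγ0 hγ1, tsum_mul_left,
      tsum_geometric_of_lt_one haγ0 haγ]
    rw [one_div, div_eq_mul_inv]
end

section
/- Finite-horizon tight bound: with P, P̂ row-stochastic (possibly time-varying, P^t denoting the product of the first t transition matrices), every one-step row overlap at least 1 - ε_T/2, rewards in [0,1] with sup-distance at most ε_R, and horizon H, the undiscounted values V = ∑_{t=0}^{H-1} ⟨(P^t)_{s₀}, R_t⟩ and V̂ defined analogously satisfy |V - V̂| ≤ H - (1-ε_R)·(2/ε_T)·(1 - (1-ε_T/2)^H) for ε_T > 0, and more generally |V - V̂| ≤ ∑_{t=0}^{H-1} (1 + (ε_R - 1)(1-ε_T/2)^t). -/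
/-- Finite-horizon tight bound, with time-varying transitions and rewards. -/
theorem finite_horizon_tight_bound {S : Type*} [Fintype S] [DecidableEq S]
    (H : ℕ) (P Phat : ℕ → Matrix S S ℝ) (R Rhat : ℕ → S → ℝ) (εT εR : ℝ)
    (hεT0 : 0 ≤ εT) (hεT2 : εT ≤ 2) (hεR0 : 0 ≤ εR) (hεR1 : εR ≤ 1)
    (hP : ∀ t s s', 0 ≤ P t s s') (hProw : ∀ t s, ∑ s', P t s s' = 1)
    (hPhat : ∀ t s s', 0 ≤ Phat t s s') (hPhatrow : ∀ t s, ∑ s', Phat t s s' = 1)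
    (hover : ∀ t s, 1 - εT / 2 ≤ ∑ s', min (P t s s') (Phat t s s'))
    (hR : ∀ t s, R t s ∈ Set.Icc (0 : ℝ) 1) (hRhat : ∀ t s, Rhat t s ∈ Set.Icc (0 : ℝ) 1)
    (hRdiff : ∀ t s, |R t s - Rhat t s| ≤ εR)
    (s₀ : S) :
    |(∑ t ∈ Finset.range H, ∑ s', (((List.range t).map P).prod) s₀ s' * R t s') -
        ∑ t ∈ Finset.range H, ∑ s', (((List.range t).map Phat).prod) s₀ s' * Rhat t s'| ≤
      ∑ t ∈ Finset.range H, (1 + (εR - 1) * (1 - εT / 2) ^ t) ∧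
    (0 < εT →
      |(∑ t ∈ Finset.range H, ∑ s', (((List.range t).map P).prod) s₀ s' * R t s') -
          ∑ t ∈ Finset.range H, ∑ s', (((List.range t).map Phat).prod) s₀ s' * Rhat t s'| ≤
        H - (1 - εR) * (2 / εT) * (1 - (1 - εT / 2) ^ H)) := by
  set Q : ℕ → Matrix S S ℝ := fun t => (((List.range t).map P).prod) with hQ
  set Qh : ℕ → Matrix S S ℝ := fun t => (((List.range t).map Phat).prod) with hQh
  have hQsucc : ∀ t, Q (t + 1) = Q t * P t := by
    intro t
    simp [hQ, List.range_succ]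
  have hQhsucc : ∀ t, Qh (t + 1) = Qh t * Phat t := by
    intro t
    simp [hQh, List.range_succ]
  have hr0 : (0:ℝ) ≤ 1 - εT / 2 := by linarith
  -- main induction: nonnegativity, row sums, overlap lower bound
  have key : ∀ t, (∀ s', 0 ≤ Q t s₀ s') ∧ (∀ s', 0 ≤ Qh t s₀ s') ∧
      (∑ s', Q t s₀ s' = 1) ∧ (∑ s', Qh t s₀ s' = 1) ∧
      ((1 - εT / 2) ^ t ≤ ∑ s', min (Q t s₀ s') (Qh t s₀ s')) := by
    intro t
    induction t with
    | zero =>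
      have h1 : Q 0 = 1 := by simp [hQ]
      have h2 : Qh 0 = 1 := by simp [hQh]
      rw [h1, h2]
      refine ⟨?_, ?_, ?_, ?_, ?_⟩
      · intro s'; by_cases h : s₀ = s' <;> simp [Matrix.one_apply, h]
      · intro s'; by_cases h : s₀ = s' <;> simp [Matrix.one_apply, h]
      · simp [Matrix.one_apply]
      · simp [Matrix.one_apply]
      · simp [Matrix.one_apply]
    | succ t ih =>
      obtain ⟨ha, hb, hsa, hsb, hov⟩ := ih
      rw [hQsucc, hQhsucc]
      refine ⟨?_, ?_, ?_, ?_, ?_⟩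
      · intro s'
        rw [Matrix.mul_apply]
        exact Finset.sum_nonneg fun s _ => mul_nonneg (ha s) (hP t s s')
      · intro s'
        rw [Matrix.mul_apply]
        exact Finset.sum_nonneg fun s _ => mul_nonneg (hb s) (hPhat t s s')
      · simp only [Matrix.mul_apply]
        rw [Finset.sum_comm]
        calc ∑ s, ∑ s', Q t s₀ s * P t s s'
            = ∑ s, Q t s₀ s * ∑ s', P t s s' := by
              simp [Finset.mul_sum]
          _ = 1 := by simp [hProw, hsa]
      · simp only [Matrix.mul_apply]
        rw [Finset.sum_comm]
        calc ∑ s, ∑ s', Qh t s₀ s * Phat t s s'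
            = ∑ s, Qh t s₀ s * ∑ s', Phat t s s' := by
              simp [Finset.mul_sum]
          _ = 1 := by simp [hPhatrow, hsb]
      · -- overlap step
        have step1 : ∑ s, (min (Q t s₀ s) (Qh t s₀ s)) * (∑ s', min (P t s s') (Phat t s s'))
            ≤ ∑ s', min ((Q t * P t) s₀ s') ((Qh t * Phat t) s₀ s') := by
          have : ∀ s', ∑ s, (min (Q t s₀ s) (Qh t s₀ s)) * (min (P t s s') (Phat t s s'))
              ≤ min ((Q t * P t) s₀ s') ((Qh t * Phat t) s₀ s') := by
            intro s'
            apply le_min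
            · rw [Matrix.mul_apply]
              apply Finset.sum_le_sum
              intro s _
              exact mul_le_mul (min_le_left _ _) (min_le_left _ _)
                (le_min (hP t s s') (hPhat t s s')) (ha s)
            · rw [Matrix.mul_apply]
              apply Finset.sum_le_sum
              intro s _
              exact mul_le_mul (min_le_right _ _) (min_le_right _ _)
                (le_min (hP t s s') (hPhat t s s')) (hb s)
          calc ∑ s, (min (Q t s₀ s) (Qh t s₀ s)) * (∑ s', min (P t s s') (Phat t s s'))
              = ∑ s', ∑ s, (min (Q t s₀ s) (Qh t s₀ s)) * (min (P t s s') (Phat t s s')) := by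
                rw [Finset.sum_comm]; simp [Finset.mul_sum]
            _ ≤ _ := Finset.sum_le_sum fun s' _ => this s'
        have step2 : (1 - εT / 2) ^ t * (1 - εT / 2)
            ≤ ∑ s, (min (Q t s₀ s) (Qh t s₀ s)) * (∑ s', min (P t s s') (Phat t s s')) := by
          have h1 : ∑ s, (min (Q t s₀ s) (Qh t s₀ s)) * (1 - εT / 2)
              ≤ ∑ s, (min (Q t s₀ s) (Qh t s₀ s)) * (∑ s', min (P t s s') (Phat t s s')) := by
            apply Finset.sum_le_sum
            intro s _
            exact mul_le_mul_of_nonneg_left (hover t s) (le_min (ha s) (hb s))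
          have h2 : (1 - εT / 2) ^ t * (1 - εT / 2)
              ≤ (∑ s, min (Q t s₀ s) (Qh t s₀ s)) * (1 - εT / 2) :=
            mul_le_mul_of_nonneg_right hov hr0
          rw [← Finset.sum_mul] at h1
          linarith
        calc (1 - εT / 2) ^ (t + 1) = (1 - εT / 2) ^ t * (1 - εT / 2) := by ring
          _ ≤ _ := le_trans step2 step1
  -- per-step bound
  have step : ∀ t, |(∑ s', Q t s₀ s' * R t s') - ∑ s', Qh t s₀ s' * Rhat t s'|
      ≤ 1 + (εR - 1) * (1 - εT / 2) ^ t := by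
    intro t
    obtain ⟨ha, hb, hsa, hsb, hov⟩ := key t
    set m : S → ℝ := fun s' => min (Q t s₀ s') (Qh t s₀ s') with hm
    set o : ℝ := ∑ s', m s' with ho
    have hm0 : ∀ s', 0 ≤ m s' := fun s' => le_min (ha s') (hb s')
    have ho0 : 0 ≤ o := Finset.sum_nonneg fun s' _ => hm0 s'
    have hdecomp : (∑ s', Q t s₀ s' * R t s') - ∑ s', Qh t s₀ s' * Rhat t s'
        = (∑ s', m s' * (R t s' - Rhat t s')) + (∑ s', (Q t s₀ s' - m s') * R t s')
          - (∑ s', (Qh t s₀ s' - m s') * Rhat t s') := by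
      rw [← Finset.sum_sub_distrib, ← Finset.sum_add_distrib, ← Finset.sum_sub_distrib]
      apply Finset.sum_congr rfl
      intro s' _
      ring
    have hA : |∑ s', m s' * (R t s' - Rhat t s')| ≤ εR * o := by
      calc |∑ s', m s' * (R t s' - Rhat t s')|
          ≤ ∑ s', |m s' * (R t s' - Rhat t s')| := Finset.abs_sum_le_sum_abs _ _
        _ ≤ ∑ s', m s' * εR := by
            apply Finset.sum_le_sum
            intro s' _
            rw [abs_mul, abs_of_nonneg (hm0 s')]
            exact mul_le_mul_of_nonneg_left (hRdiff t s') (hm0 s')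
        _ = εR * o := by rw [← Finset.sum_mul]; ring
    have hB1 : ∀ s', 0 ≤ (Q t s₀ s' - m s') * R t s' :=
      fun s' => mul_nonneg (by simp [hm, min_le_left]) (hR t s').1
    have hB2 : ∀ s', (Q t s₀ s' - m s') * R t s' ≤ Q t s₀ s' - m s' := by
      intro s'
      have := (hR t s').2
      nlinarith [hm0 s', min_le_left (Q t s₀ s') (Qh t s₀ s'), (hR t s').1]
    have hC1 : ∀ s', 0 ≤ (Qh t s₀ s' - m s') * Rhat t s' :=
      fun s' => mul_nonneg (by simp [hm, min_le_right]) (hRhat t s').1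
    have hC2 : ∀ s', (Qh t s₀ s' - m s') * Rhat t s' ≤ Qh t s₀ s' - m s' := by
      intro s'
      have := (hRhat t s').2
      nlinarith [hm0 s', min_le_right (Q t s₀ s') (Qh t s₀ s'), (hRhat t s').1]
    have hBsum : ∑ s', (Q t s₀ s' - m s') * R t s' ≤ 1 - o := by
      calc ∑ s', (Q t s₀ s' - m s') * R t s' ≤ ∑ s', (Q t s₀ s' - m s') :=
            Finset.sum_le_sum fun s' _ => hB2 s'
        _ = 1 - o := by rw [Finset.sum_sub_distrib, hsa]
    have hBsum0 : 0 ≤ ∑ s', (Q t s₀ s' - m s') * R t s' :=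
      Finset.sum_nonneg fun s' _ => hB1 s'
    have hCsum : ∑ s', (Qh t s₀ s' - m s') * Rhat t s' ≤ 1 - o := by
      calc ∑ s', (Qh t s₀ s' - m s') * Rhat t s' ≤ ∑ s', (Qh t s₀ s' - m s') :=
            Finset.sum_le_sum fun s' _ => hC2 s'
        _ = 1 - o := by rw [Finset.sum_sub_distrib, hsb]
    have hCsum0 : 0 ≤ ∑ s', (Qh t s₀ s' - m s') * Rhat t s' :=
      Finset.sum_nonneg fun s' _ => hC1 s'
    have hA' := abs_le.mp hA
    have hbound : |(∑ s', Q t s₀ s' * R t s') - ∑ s', Qh t s₀ s' * Rhat t s'|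
        ≤ 1 + (εR - 1) * o := by
      rw [hdecomp, abs_le]
      constructor
      · linarith [hA'.1]
      · linarith [hA'.2]
    have hmono : 1 + (εR - 1) * o ≤ 1 + (εR - 1) * (1 - εT / 2) ^ t := by
      have : (εR - 1) * o ≤ (εR - 1) * (1 - εT / 2) ^ t := by
        apply mul_le_mul_of_nonpos_left hov (by linarith)
      linarith
    linarith
  -- first bound
  have first : |(∑ t ∈ Finset.range H, ∑ s', Q t s₀ s' * R t s') -
      ∑ t ∈ Finset.range H, ∑ s', Qh t s₀ s' * Rhat t s'|
      ≤ ∑ t ∈ Finset.range H, (1 + (εR - 1) * (1 - εT / 2) ^ t) := by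
    rw [← Finset.sum_sub_distrib]
    calc |∑ t ∈ Finset.range H, ((∑ s', Q t s₀ s' * R t s') - ∑ s', Qh t s₀ s' * Rhat t s')|
        ≤ ∑ t ∈ Finset.range H, |(∑ s', Q t s₀ s' * R t s') - ∑ s', Qh t s₀ s' * Rhat t s'| :=
          Finset.abs_sum_le_sum_abs _ _
      _ ≤ _ := Finset.sum_le_sum fun t _ => step t
  refine ⟨first, fun hεTpos => ?_⟩
  have hne : (1 - εT / 2 : ℝ) ≠ 1 := by
    intro h; linarith [h]
  have hgeom : ∑ t ∈ Finset.range H, (1 - εT / 2) ^ t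
      = ((1 - εT / 2) ^ H - 1) / ((1 - εT / 2) - 1) := geom_sum_eq hne H
  have heq : ∑ t ∈ Finset.range H, (1 + (εR - 1) * (1 - εT / 2) ^ t)
      = H - (1 - εR) * (2 / εT) * (1 - (1 - εT / 2) ^ H) := by
    rw [Finset.sum_add_distrib, ← Finset.mul_sum, hgeom, Finset.sum_const,
      Finset.card_range]
    have hεTne : εT ≠ 0 := ne_of_gt hεTpos
    field_simp
    ring_nf
    simp only [mul_comm εT, mul_assoc, inv_mul_cancel_left₀ hεTne, inv_mul_cancel₀ hεTne]
    ring
  rw [← heq]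
  exact first
end

section
/- Finite-horizon classical bound: under the hypotheses that ‖(P_t)_s - (P̂_t)_s‖₁ ≤ ε_T and ‖R_t - R̂_t‖_∞ ≤ ε_R for all s and t < H, with rewards in [0,1], the undiscounted H-step values satisfy |V_{0,s} - V̂_{0,s}| ≤ ε_R·H + ε_T·H(H-1)/4 for every state s. -/
/-- Finite-horizon classical bound via backward recursion. -/
theorem finite_horizon_classical_bound {S : Type*} [Fintype S] [DecidableEq S]
    (H : ℕ) (P Phat : ℕ → Matrix S S ℝ) (R Rhat : ℕ → S → ℝ) (εT εR : ℝ)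
    (hεT0 : 0 ≤ εT) (hεR0 : 0 ≤ εR)
    (hP : ∀ t s s', 0 ≤ P t s s') (hProw : ∀ t s, ∑ s', P t s s' = 1)
    (hPhat : ∀ t s s', 0 ≤ Phat t s s') (hPhatrow : ∀ t s, ∑ s', Phat t s s' = 1)
    (hTdiff : ∀ t, t < H → ∀ s, ∑ s', |P t s s' - Phat t s s'| ≤ εT)
    (hR : ∀ t s, R t s ∈ Set.Icc (0 : ℝ) 1) (hRhat : ∀ t s, Rhat t s ∈ Set.Icc (0 : ℝ) 1)
    (hRdiff : ∀ t, t < H → ∀ s, |R t s - Rhat t s| ≤ εR)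
    (V Vhat : ℕ → S → ℝ)
    (hVH : ∀ s, V H s = 0) (hVhatH : ∀ s, Vhat H s = 0)
    (hVrec : ∀ h, h < H → ∀ s, V h s = R h s + ∑ s', P h s s' * V (h + 1) s')
    (hVhatrec : ∀ h, h < H → ∀ s, Vhat h s = Rhat h s + ∑ s', Phat h s s' * Vhat (h + 1) s') :
    ∀ s, |V 0 s - Vhat 0 s| ≤ εR * H + εT * (H * (H - 1 : ℝ)) / 4 := by
  -- bounds on V
  have hVb : ∀ d h, h + d = H → ∀ s, 0 ≤ V h s ∧ V h s ≤ (d : ℝ) := by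
    intro d
    induction d with
    | zero => intro h hh s; simp only [Nat.add_zero] at hh; subst hh
              simp [hVH s]
    | succ d ih =>
      intro h hh s
      have hlt : h < H := by omega
      have ih' := ih (h + 1) (by omega)
      rw [hVrec h hlt s]
      constructor
      · have : 0 ≤ ∑ s', P h s s' * V (h + 1) s' := by
          apply Finset.sum_nonneg; intro s' _
          exact mul_nonneg (hP h s s') (ih' s').1
        have := (hR h s).1
        linarith
      · have hsum : ∑ s', P h s s' * V (h + 1) s' ≤ ∑ s', P h s s' * (d : ℝ) := by
          apply Finset.sum_le_sum; intro s' _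
          exact mul_le_mul_of_nonneg_left (ih' s').2 (hP h s s')
        rw [← Finset.sum_mul, hProw h s, one_mul] at hsum
        have := (hR h s).2
        push_cast
        linarith
  -- main induction
  have key : ∀ d h, h + d = H → ∀ s,
      |V h s - Vhat h s| ≤ εR * d + εT * ((d : ℝ) * ((d : ℝ) - 1)) / 4 := by
    intro d
    induction d with
    | zero => intro h hh s; simp only [Nat.add_zero] at hh; subst hh
              simp [hVH s, hVhatH s]
    | succ d ih =>
      intro h hh s
      have hlt : h < H := by omega
      have ih' := ih (h + 1) (by omega)
      have hVb' := hVb d (h + 1) (by omega)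
      rw [hVrec h hlt s, hVhatrec h hlt s]
      set c : ℝ := (d : ℝ) / 2 with hc
      have hc0 : 0 ≤ c := by positivity
      have split : R h s + ∑ s', P h s s' * V (h + 1) s'
          - (Rhat h s + ∑ s', Phat h s s' * Vhat (h + 1) s')
          = (R h s - Rhat h s)
            + (∑ s', (P h s s' - Phat h s s') * (V (h + 1) s' - c))
            + (∑ s', Phat h s s' * (V (h + 1) s' - Vhat (h + 1) s')) := by
        have h1 : ∑ s', (P h s s' - Phat h s s') * (V (h + 1) s' - c)
            = (∑ s', P h s s' * V (h + 1) s') - (∑ s', Phat h s s' * V (h + 1) s')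
              - c * ((∑ s', P h s s') - (∑ s', Phat h s s')) := by
          have e : ∀ s', (P h s s' - Phat h s s') * (V (h + 1) s' - c)
              = P h s s' * V (h + 1) s' - Phat h s s' * V (h + 1) s'
                - (c * P h s s' - c * Phat h s s') := fun s' => by ring
          simp only [e, Finset.sum_sub_distrib, ← Finset.mul_sum]
          ring
        have h2 : ∑ s', Phat h s s' * (V (h + 1) s' - Vhat (h + 1) s')
            = (∑ s', Phat h s s' * V (h + 1) s') - ∑ s', Phat h s s' * Vhat (h + 1) s' := by
          simp only [mul_sub, Finset.sum_sub_distrib]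
        rw [h1, h2, hProw h s, hPhatrow h s]; ring
      rw [split]
      have b1 : |R h s - Rhat h s| ≤ εR := hRdiff h hlt s
      have b2 : |∑ s', (P h s s' - Phat h s s') * (V (h + 1) s' - c)| ≤ εT * c := by
        calc |∑ s', (P h s s' - Phat h s s') * (V (h + 1) s' - c)|
            ≤ ∑ s', |(P h s s' - Phat h s s') * (V (h + 1) s' - c)| :=
              Finset.abs_sum_le_sum_abs _ _
          _ = ∑ s', |P h s s' - Phat h s s'| * |V (h + 1) s' - c| := by
              simp [abs_mul]
          _ ≤ ∑ s', |P h s s' - Phat h s s'| * c := by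
              apply Finset.sum_le_sum; intro s' _
              apply mul_le_mul_of_nonneg_left _ (abs_nonneg _)
              rw [abs_le]
              have := (hVb' s').1; have := (hVb' s').2
              constructor <;> [linarith [hc]; linarith [hc]]
          _ = (∑ s', |P h s s' - Phat h s s'|) * c := by rw [Finset.sum_mul]
          _ ≤ εT * c := mul_le_mul_of_nonneg_right (hTdiff h hlt s) hc0
      have b3 : |∑ s', Phat h s s' * (V (h + 1) s' - Vhat (h + 1) s')|
          ≤ εR * d + εT * ((d : ℝ) * ((d : ℝ) - 1)) / 4 := by
        calc |∑ s', Phat h s s' * (V (h + 1) s' - Vhat (h + 1) s')|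
            ≤ ∑ s', |Phat h s s' * (V (h + 1) s' - Vhat (h + 1) s')| :=
              Finset.abs_sum_le_sum_abs _ _
          _ = ∑ s', Phat h s s' * |V (h + 1) s' - Vhat (h + 1) s'| := by
              apply Finset.sum_congr rfl; intro s' _
              rw [abs_mul, abs_of_nonneg (hPhat h s s')]
          _ ≤ ∑ s', Phat h s s' * (εR * d + εT * ((d : ℝ) * ((d : ℝ) - 1)) / 4) := by
              apply Finset.sum_le_sum; intro s' _
              exact mul_le_mul_of_nonneg_left (ih' s') (hPhat h s s')
          _ = εR * d + εT * ((d : ℝ) * ((d : ℝ) - 1)) / 4 := by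
              rw [← Finset.sum_mul, hPhatrow h s, one_mul]
      have := abs_add_le (R h s - Rhat h s + ∑ s', (P h s s' - Phat h s s') * (V (h + 1) s' - c))
        (∑ s', Phat h s s' * (V (h + 1) s' - Vhat (h + 1) s'))
      have habs2 := abs_add_le (R h s - Rhat h s)
        (∑ s', (P h s s' - Phat h s s') * (V (h + 1) s' - c))
      push_cast
      rw [hc] at b2
      nlinarith [b1, b2, b3]
  have := key H 0 (by omega)
  simpa using this
end

section
/- Sub-stochastic discounted drift bound: let Q, Q̂ be matrices with nonnegative entries whose rows each sum to exactly γ ∈ [0,1), and suppose each row overlap satisfies ∑_{s'} min(Q_{s,s'}, Q̂_{s,s'}) ≥ γ - δ for some δ ∈ [0,γ]. Then for every t and initial state s₀, ∑_s min((Q^t)_{s₀,s}, (Q̂^t)_{s₀,s}) ≥ (γ - δ)^t. -/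
/-- Sub-stochastic discounted drift bound. -/
theorem substochastic_overlap_bound {S : Type*} [Fintype S] [DecidableEq S]
    (Q Qhat : Matrix S S ℝ) (γ δ : ℝ)
    (hγ0 : 0 ≤ γ) (hγ1 : γ < 1) (hδ0 : 0 ≤ δ) (hδγ : δ ≤ γ)
    (hQ : ∀ s s', 0 ≤ Q s s') (hQrow : ∀ s, ∑ s', Q s s' = γ)
    (hQhat : ∀ s s', 0 ≤ Qhat s s') (hQhatrow : ∀ s, ∑ s', Qhat s s' = γ)
    (hover : ∀ s, γ - δ ≤ ∑ s', min (Q s s') (Qhat s s')) :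
    ∀ (t : ℕ) (s₀ : S), (γ - δ) ^ t ≤ ∑ s, min ((Q ^ t) s₀ s) ((Qhat ^ t) s₀ s) := by
  have hγδ : 0 ≤ γ - δ := by linarith
  have hpow : ∀ (M : Matrix S S ℝ), (∀ s s', 0 ≤ M s s') →
      ∀ t (s s' : S), 0 ≤ (M ^ t) s s' := by
    intro M hM t
    induction t with
    | zero =>
      intro s s'
      simp only [pow_zero, Matrix.one_apply]
      split <;> norm_num
    | succ n ih =>
      intro s s'
      rw [pow_succ, Matrix.mul_apply]
      exact Finset.sum_nonneg fun i _ => mul_nonneg (ih s i) (hM i s')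
  intro t
  induction t with
  | zero =>
    intro s₀
    simp [Matrix.one_apply, Finset.sum_ite_eq']
  | succ n ih =>
    intro s₀
    set m : S → ℝ := fun s' => min ((Q ^ n) s₀ s') ((Qhat ^ n) s₀ s') with hm
    have hmnn : ∀ s', 0 ≤ m s' := fun s' => le_min (hpow Q hQ n s₀ s') (hpow Qhat hQhat n s₀ s')
    have key : ∀ s : S, ∑ s', m s' * min (Q s' s) (Qhat s' s)
        ≤ min ((Q ^ (n + 1)) s₀ s) ((Qhat ^ (n + 1)) s₀ s) := by
      intro s
      apply le_min
      · rw [pow_succ, Matrix.mul_apply]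
        apply Finset.sum_le_sum
        intro i _
        exact mul_le_mul (min_le_left _ _) (min_le_left _ _)
          (le_min (hQ i s) (hQhat i s)) (hpow Q hQ n s₀ i)
      · rw [pow_succ, Matrix.mul_apply]
        apply Finset.sum_le_sum
        intro i _
        exact mul_le_mul (min_le_right _ _) (min_le_right _ _)
          (le_min (hQ i s) (hQhat i s)) (hpow Qhat hQhat n s₀ i)
    calc (γ - δ) ^ (n + 1) = (γ - δ) ^ n * (γ - δ) := by ring
      _ ≤ (∑ s', m s') * (γ - δ) := by
          apply mul_le_mul_of_nonneg_right (ih s₀) hγδ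
      _ = ∑ s', m s' * (γ - δ) := by rw [Finset.sum_mul]
      _ ≤ ∑ s', m s' * ∑ s, min (Q s' s) (Qhat s' s) := by
          apply Finset.sum_le_sum
          intro i _
          exact mul_le_mul_of_nonneg_left (hover i) (hmnn i)
      _ = ∑ s, ∑ s', m s' * min (Q s' s) (Qhat s' s) := by
          rw [Finset.sum_comm]
          simp [Finset.mul_sum]
      _ ≤ ∑ s, min ((Q ^ (n + 1)) s₀ s) ((Qhat ^ (n + 1)) s₀ s) :=
          Finset.sum_le_sum fun s _ => key s
end

section
/- Hierarchical (options) value bound: let Q, Q̂ be nonnegative matrices whose rows sum to γ ∈ [0,1) with per-entry difference |Q_{s,s'} - Q̂_{s,s'}| ≤ ε_T and Q_{s,s} = Q̂_{s,s} = 0 on an (|S|+1)-state augmented space including an absorbing state, and rewards R, R̂ ∈ [0, R_MAX]^S with ‖R - R̂‖_∞ ≤ ε_R. If each row overlap satisfies ∑_{s'} min(Q_{s,s'}, Q̂_{s,s'}) ≥ γ - (|S|-1)ε_T, then the values V_s = ∑_{t≥0} ⟨(Q^t)_s, R⟩ and V̂_s (analogously) satisfy |V_s - V̂_s| ≤ R_MAX/(1-γ)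 - (R_MAX - ε_R)/(1 - γ + (|S|-1)ε_T). -/
private lemma matpow_nonneg {ι : Type*} [Fintype ι] [DecidableEq ι] (A : Matrix ι ι ℝ)
    (hA : ∀ a b, 0 ≤ A a b) : ∀ (t : ℕ) (a b : ι), 0 ≤ (A ^ t) a b := by
  intro t
  induction t with
  | zero =>
    intro a b
    simp only [pow_zero, Matrix.one_apply]
    split <;> norm_num
  | succ n ih =>
    intro a b
    rw [pow_succ, Matrix.mul_apply]
    exact Finset.sum_nonneg fun c _ => mul_nonneg (ih a c) (hA c b)

private lemma matpow_le {ι : Type*} [Fintype ι] [DecidableEq ι] (A B : Matrix ι ι ℝ)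
    (hA : ∀ a b, 0 ≤ A a b) (hB : ∀ a b, 0 ≤ B a b) (hAB : ∀ a b, A a b ≤ B a b) :
    ∀ (t : ℕ) (a b : ι), (A ^ t) a b ≤ (B ^ t) a b := by
  intro t
  induction t with
  | zero => intro a b; simp
  | succ n ih =>
    intro a b
    rw [pow_succ, pow_succ, Matrix.mul_apply, Matrix.mul_apply]
    refine Finset.sum_le_sum fun c _ => ?_
    exact mul_le_mul (ih a c) (hAB c b) (hA c b) (matpow_nonneg B hB n a c)

private lemma matpow_row_sum {ι : Type*} [Fintype ι] [DecidableEq ι] (A : Matrix ι ι ℝ)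
    (γ : ℝ) (h : ∀ a, ∑ b, A a b = γ) : ∀ (t : ℕ) (a : ι), ∑ b, (A ^ t) a b = γ ^ t := by
  intro t
  induction t with
  | zero => intro a; simp [Matrix.one_apply]
  | succ n ih =>
    intro a
    calc ∑ b, (A ^ (n + 1)) a b = ∑ b, ∑ c, A a c * (A ^ n) c b := by
          simp [pow_succ', Matrix.mul_apply]
      _ = ∑ c, A a c * ∑ b, (A ^ n) c b := by
          rw [Finset.sum_comm]; simp [Finset.mul_sum]
      _ = ∑ c, A a c * γ ^ n := by simp [ih]
      _ = γ ^ (n + 1) := by rw [← Finset.sum_mul, h a]; ring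

private lemma matpow_row_sum_ge {ι : Type*} [Fintype ι] [DecidableEq ι] (A : Matrix ι ι ℝ)
    (β : ℝ) (hβ : 0 ≤ β) (hA : ∀ a b, 0 ≤ A a b) (h : ∀ a, β ≤ ∑ b, A a b) :
    ∀ (t : ℕ) (a : ι), β ^ t ≤ ∑ b, (A ^ t) a b := by
  intro t
  induction t with
  | zero => intro a; simp [Matrix.one_apply]
  | succ n ih =>
    intro a
    calc β ^ (n + 1) = β * β ^ n := by ring
      _ ≤ (∑ c, A a c) * β ^ n :=
          mul_le_mul_of_nonneg_right (h a) (pow_nonneg hβ n)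
      _ = ∑ c, A a c * β ^ n := by rw [Finset.sum_mul]
      _ ≤ ∑ c, A a c * ∑ b, (A ^ n) c b :=
          Finset.sum_le_sum fun c _ => mul_le_mul_of_nonneg_left (ih c) (hA a c)
      _ = ∑ b, (A ^ (n + 1)) a b := by
          have heq : ∑ b, (A ^ (n + 1)) a b = ∑ c, A a c * ∑ b, (A ^ n) c b := by
            calc ∑ b, (A ^ (n + 1)) a b = ∑ b, ∑ c, A a c * (A ^ n) c b := by
                  simp [pow_succ', Matrix.mul_apply]
              _ = ∑ c, A a c * ∑ b, (A ^ n) c b := by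
                  rw [Finset.sum_comm]; simp [Finset.mul_sum]
          rw [heq]

private lemma one_side {ι : Type*} [Fintype ι] [DecidableEq ι]
    (Q Qhat : Matrix ι ι ℝ) (R Rhat : ι → ℝ) (γ β εR RMAX : ℝ)
    (hγ0 : 0 ≤ γ) (hγ1 : γ < 1) (hβ0 : 0 ≤ β) (hβγ : β ≤ γ)
    (hεR0 : 0 ≤ εR) (hεR : εR ≤ RMAX)
    (hQ : ∀ a b, 0 ≤ Q a b) (hQrow : ∀ a, ∑ b, Q a b = γ)
    (hQhat : ∀ a b, 0 ≤ Qhat a b)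
    (hR : ∀ a, R a ∈ Set.Icc (0 : ℝ) RMAX) (hRhat : ∀ a, Rhat a ∈ Set.Icc (0 : ℝ) RMAX)
    (hdiff : ∀ a, R a - Rhat a ≤ εR)
    (hover : ∀ a, β ≤ ∑ b, min (Q a b) (Qhat a b)) (a : ι)
    (hRsum : Summable fun t : ℕ => ∑ b, (Qhat ^ t) a b * Rhat b) :
    (∑' t : ℕ, ∑ b, (Q ^ t) a b * R b) - (∑' t : ℕ, ∑ b, (Qhat ^ t) a b * Rhat b)
      ≤ RMAX / (1 - γ) - (RMAX - εR) / (1 - β) := by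
  set M : Matrix ι ι ℝ := Matrix.of fun a b => min (Q a b) (Qhat a b) with hM
  have hMnn : ∀ a b, 0 ≤ M a b := fun a b => le_min (hQ a b) (hQhat a b)
  have hMQ : ∀ a b, M a b ≤ Q a b := fun a b => min_le_left _ _
  have hMQhat : ∀ a b, M a b ≤ Qhat a b := fun a b => min_le_right _ _
  have hβ1 : β < 1 := lt_of_le_of_lt hβγ hγ1
  have hgeomγ : Summable (fun t : ℕ => γ ^ t) := summable_geometric_of_lt_one hγ0 hγ1
  have hgeomβ : Summable (fun t : ℕ => β ^ t) := summable_geometric_of_lt_one hβ0 hβ1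
  set f : ℕ → ℝ := fun t => ∑ b, (Q ^ t) a b * R b with hf
  set g : ℕ → ℝ := fun t => ∑ b, (Qhat ^ t) a b * Rhat b with hg
  have hf0 : ∀ t, 0 ≤ f t := fun t =>
    Finset.sum_nonneg fun b _ => mul_nonneg (matpow_nonneg Q hQ t a b) (hR b).1
  have hfle : ∀ t, f t ≤ RMAX * γ ^ t := by
    intro t
    calc f t ≤ ∑ b, (Q ^ t) a b * RMAX :=
          Finset.sum_le_sum fun b _ =>
            mul_le_mul_of_nonneg_left (hR b).2 (matpow_nonneg Q hQ t a b)
      _ = RMAX * γ ^ t := by rw [← Finset.sum_mul, matpow_row_sum Q γ hQrow t a]; ring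
  have hfs : Summable f := Summable.of_nonneg_of_le hf0 hfle (hgeomγ.mul_left RMAX)
  have hgs : Summable g := hRsum
  -- per-term key bound
  have key : ∀ t : ℕ, f t - g t ≤ RMAX * γ ^ t - (RMAX - εR) * β ^ t := by
    intro t
    have hgge : ∑ b, (M ^ t) a b * Rhat b ≤ g t :=
      Finset.sum_le_sum fun b _ =>
        mul_le_mul_of_nonneg_right (matpow_le M Qhat hMnn hQhat hMQhat t a b) (hRhat b).1
    have hterm : ∀ b, (Q ^ t) a b * R b - (M ^ t) a b * Rhat b
        ≤ (Q ^ t) a b * RMAX - (M ^ t) a b * (RMAX - εR) := by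
      intro b
      have h1 : (M ^ t) a b ≤ (Q ^ t) a b := matpow_le M Q hMnn hQ hMQ t a b
      have h2 : 0 ≤ (M ^ t) a b := matpow_nonneg M hMnn t a b
      have h3 := (hR b).1; have h4 := (hR b).2
      have h5 := hdiff b
      nlinarith [mul_nonneg h2 hεR0]
    have hσge : β ^ t ≤ ∑ b, (M ^ t) a b :=
      matpow_row_sum_ge M β hβ0 hMnn hover t a
    calc f t - g t ≤ f t - ∑ b, (M ^ t) a b * Rhat b := by linarith
      _ = ∑ b, ((Q ^ t) a b * R b - (M ^ t) a b * Rhat b) := by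
          rw [Finset.sum_sub_distrib]
      _ ≤ ∑ b, ((Q ^ t) a b * RMAX - (M ^ t) a b * (RMAX - εR)) :=
          Finset.sum_le_sum fun b _ => hterm b
      _ = RMAX * γ ^ t - (RMAX - εR) * (∑ b, (M ^ t) a b) := by
          rw [Finset.sum_sub_distrib, ← Finset.sum_mul, ← Finset.sum_mul,
            matpow_row_sum Q γ hQrow t a]; ring
      _ ≤ RMAX * γ ^ t - (RMAX - εR) * β ^ t := by
          have : 0 ≤ RMAX - εR := by linarith
          nlinarith
  have hhs : Summable (fun t : ℕ => RMAX * γ ^ t - (RMAX - εR) * β ^ t) :=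
    (hgeomγ.mul_left RMAX).sub (hgeomβ.mul_left (RMAX - εR))
  calc (∑' t, f t) - (∑' t, g t) = ∑' t, (f t - g t) := (Summable.tsum_sub hfs hgs).symm
    _ ≤ ∑' t, (RMAX * γ ^ t - (RMAX - εR) * β ^ t) :=
        Summable.tsum_le_tsum key (hfs.sub hgs) hhs
    _ = RMAX * (1 - γ)⁻¹ - (RMAX - εR) * (1 - β)⁻¹ := by
        rw [Summable.tsum_sub (hgeomγ.mul_left RMAX) (hgeomβ.mul_left (RMAX - εR)),
          tsum_mul_left, tsum_mul_left, tsum_geometric_of_lt_one hγ0 hγ1,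
          tsum_geometric_of_lt_one hβ0 hβ1]
    _ = RMAX / (1 - γ) - (RMAX - εR) / (1 - β) := by
        rw [div_eq_mul_inv, div_eq_mul_inv]

/-- Hierarchical (options) value bound on an augmented state space `Option S`,
where `none` plays the role of the absorbing state `s_x` with zero reward. -/
theorem hierarchy_value_bound {S : Type*} [Fintype S] [DecidableEq S]
    (Q Qhat : Matrix (Option S) (Option S) ℝ) (R Rhat : Option S → ℝ)
    (γ εT εR RMAX : ℝ)
    (hγ0 : 0 ≤ γ) (hγ1 : γ < 1) (hRMAX : 0 < RMAX)
    (hεT0 : 0 ≤ εT) (hεR0 : 0 ≤ εR) (hεR : εR ≤ RMAX)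
    (hcard : 2 ≤ Fintype.card S)
    (hγεT : 0 ≤ γ - ((Fintype.card S : ℝ) - 1) * εT)
    (hQ : ∀ a b, 0 ≤ Q a b) (hQrow : ∀ a, ∑ b, Q a b = γ)
    (hQhat : ∀ a b, 0 ≤ Qhat a b) (hQhatrow : ∀ a, ∑ b, Qhat a b = γ)
    (hdiag : ∀ a, Q a a = 0) (hdiaghat : ∀ a, Qhat a a = 0)
    (hentry : ∀ a b, |Q a b - Qhat a b| ≤ εT)
    (hRnn : ∀ a, R a ∈ Set.Icc (0 : ℝ) RMAX) (hRhatnn : ∀ a, Rhat a ∈ Set.Icc (0 : ℝ) RMAX)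
    (hRabs : R none = 0) (hRhatabs : Rhat none = 0)
    (hRdiff : ∀ a, |R a - Rhat a| ≤ εR)
    (hover : ∀ a, γ - ((Fintype.card S : ℝ) - 1) * εT ≤ ∑ b, min (Q a b) (Qhat a b))
    (V Vhat : Option S → ℝ)
    (hV : ∀ a, V a = ∑' t : ℕ, ∑ b, (Q ^ t) a b * R b)
    (hVhat : ∀ a, Vhat a = ∑' t : ℕ, ∑ b, (Qhat ^ t) a b * Rhat b) :
    ∀ a, |V a - Vhat a| ≤
      RMAX / (1 - γ) - (RMAX - εR) / (1 - γ + ((Fintype.card S : ℝ) - 1) * εT) := by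
  intro a
  set β : ℝ := γ - ((Fintype.card S : ℝ) - 1) * εT with hβ
  have hβγ : β ≤ γ := by
    have h1 : (1 : ℝ) ≤ (Fintype.card S : ℝ) := by exact_mod_cast le_trans one_le_two hcard
    nlinarith
  have hgeomγ : Summable (fun t : ℕ => γ ^ t) := summable_geometric_of_lt_one hγ0 hγ1
  have hsumQ : Summable fun t : ℕ => ∑ b, (Q ^ t) a b * R b := by
    refine Summable.of_nonneg_of_le
      (fun t => Finset.sum_nonneg fun b _ => mul_nonneg (matpow_nonneg Q hQ t a b) (hRnn b).1)
      (fun t => ?_) (hgeomγ.mul_left RMAX)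
    calc (∑ b, (Q ^ t) a b * R b) ≤ ∑ b, (Q ^ t) a b * RMAX :=
          Finset.sum_le_sum fun b _ =>
            mul_le_mul_of_nonneg_left (hRnn b).2 (matpow_nonneg Q hQ t a b)
      _ = RMAX * γ ^ t := by rw [← Finset.sum_mul, matpow_row_sum Q γ hQrow t a]; ring
  have hsumQhat : Summable fun t : ℕ => ∑ b, (Qhat ^ t) a b * Rhat b := by
    refine Summable.of_nonneg_of_le
      (fun t => Finset.sum_nonneg fun b _ =>
        mul_nonneg (matpow_nonneg Qhat hQhat t a b) (hRhatnn b).1)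
      (fun t => ?_) (hgeomγ.mul_left RMAX)
    calc (∑ b, (Qhat ^ t) a b * Rhat b) ≤ ∑ b, (Qhat ^ t) a b * RMAX :=
          Finset.sum_le_sum fun b _ =>
            mul_le_mul_of_nonneg_left (hRhatnn b).2 (matpow_nonneg Qhat hQhat t a b)
      _ = RMAX * γ ^ t := by rw [← Finset.sum_mul, matpow_row_sum Qhat γ hQhatrow t a]; ring
  have h1β : 1 - γ + ((Fintype.card S : ℝ) - 1) * εT = 1 - β := by rw [hβ]; ring
  rw [hV a, hVhat a, abs_sub_le_iff, h1β]
  constructor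
  · exact one_side Q Qhat R Rhat γ β εR RMAX hγ0 hγ1 hγεT hβγ hεR0 hεR
      hQ hQrow hQhat hRnn hRhatnn
      (fun b => (abs_sub_le_iff.mp (hRdiff b)).1) hover a hsumQhat
  · refine one_side Qhat Q Rhat R γ β εR RMAX hγ0 hγ1 hγεT hβγ hεR0 hεR
      hQhat hQhatrow hQ hRhatnn hRnn
      (fun b => (abs_sub_le_iff.mp (hRdiff b)).2) (fun b => ?_) a hsumQ
    simpa [min_comm] using hover b
end

section
/- One-step recursion of the classical simulation lemma: if P, P̂ are row-stochastic with ‖P_s - P̂_s‖₁ ≤ ε_T for all s, R, R̂ : S → [0,1] with ‖R - R̂‖_∞ ≤ ε_R, γ ∈ [0,1), and V, V̂ are the corresponding discounted values, then for all s, |V_s - V̂_s| ≤ ε_R + γε_T/(2(1-γ)) + γ‖V - V̂‖_∞. -/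
/-- One-step recursion of the classical simulation lemma. -/
theorem one_step_recursion {S : Type*} [Fintype S] [DecidableEq S] [Nonempty S]
    (P Phat : Matrix S S ℝ) (R Rhat : S → ℝ) (γ εT εR : ℝ)
    (hγ0 : 0 ≤ γ) (hγ1 : γ < 1)
    (hP : ∀ s s', 0 ≤ P s s') (hProw : ∀ s, ∑ s', P s s' = 1)
    (hPhat : ∀ s s', 0 ≤ Phat s s') (hPhatrow : ∀ s, ∑ s', Phat s s' = 1)
    (hTdiff : ∀ s, ∑ s', |P s s' - Phat s s'| ≤ εT)
    (hR : ∀ s, R s ∈ Set.Icc (0 : ℝ) 1) (hRhat : ∀ s, Rhat s ∈ Set.Icc (0 : ℝ) 1)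
    (hRdiff : ∀ s, |R s - Rhat s| ≤ εR)
    (V Vhat : S → ℝ)
    (hVbd : ∀ s, V s ∈ Set.Icc (0 : ℝ) (1 / (1 - γ)))
    (hVhatbd : ∀ s, Vhat s ∈ Set.Icc (0 : ℝ) (1 / (1 - γ)))
    (hV : ∀ s, V s = R s + γ * ∑ s', P s s' * V s')
    (hVhat : ∀ s, Vhat s = Rhat s + γ * ∑ s', Phat s s' * Vhat s') :
    ∀ s, |V s - Vhat s| ≤ εR + γ * εT / (2 * (1 - γ)) + γ * ⨆ s', |V s' - Vhat s'| := by
  have h1γ : (0:ℝ) < 1 - γ := by linarith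
  set M := ⨆ s', |V s' - Vhat s'| with hMdef
  have hM : ∀ t, |V t - Vhat t| ≤ M := fun t =>
    le_ciSup (Set.Finite.bddAbove (Set.finite_range fun t => |V t - Vhat t|)) t
  set c : ℝ := 1 / (2 * (1 - γ)) with hcdef
  have hc0 : 0 < c := by positivity
  have h2c : 2 * c = 1 / (1 - γ) := by
    rw [hcdef]; field_simp
  have hVc : ∀ t, |V t - c| ≤ c := by
    intro t
    obtain ⟨h0, h1⟩ := hVbd t
    rw [abs_le]
    constructor
    · linarith
    · have : V t ≤ 2 * c := by rw [h2c]; exact h1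
      linarith
  intro s
  have hA : ∑ s', (P s s' - Phat s s') * (V s' - c)
      = ∑ s', P s s' * V s' - ∑ s', Phat s s' * V s' := by
    have h : ∀ t, (P s t - Phat s t) * (V t - c)
        = (P s t * V t - Phat s t * V t) - c * P s t + c * Phat s t := fun t => by ring
    simp_rw [h, Finset.sum_add_distrib, Finset.sum_sub_distrib, ← Finset.mul_sum,
      hProw s, hPhatrow s]
    ring
  have hB : ∑ s', Phat s s' * (V s' - Vhat s')
      = ∑ s', Phat s s' * V s' - ∑ s', Phat s s' * Vhat s' := by
    simp_rw [mul_sub, Finset.sum_sub_distrib]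
  have key : V s - Vhat s = (R s - Rhat s)
      + γ * (∑ s', (P s s' - Phat s s') * (V s' - c))
      + γ * ∑ s', Phat s s' * (V s' - Vhat s') := by
    rw [hA, hB, hV s, hVhat s]; ring
  have b2 : |∑ s', (P s s' - Phat s s') * (V s' - c)| ≤ εT * c := by
    calc |∑ s', (P s s' - Phat s s') * (V s' - c)|
        ≤ ∑ s', |(P s s' - Phat s s') * (V s' - c)| := Finset.abs_sum_le_sum_abs _ _
      _ ≤ ∑ s', |P s s' - Phat s s'| * c := by
          apply Finset.sum_le_sum
          intro t _
          rw [abs_mul]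
          exact mul_le_mul_of_nonneg_left (hVc t) (abs_nonneg _)
      _ = (∑ s', |P s s' - Phat s s'|) * c := by rw [← Finset.sum_mul]
      _ ≤ εT * c := mul_le_mul_of_nonneg_right (hTdiff s) hc0.le
  have b3 : |∑ s', Phat s s' * (V s' - Vhat s')| ≤ M := by
    calc |∑ s', Phat s s' * (V s' - Vhat s')|
        ≤ ∑ s', |Phat s s' * (V s' - Vhat s')| := Finset.abs_sum_le_sum_abs _ _
      _ ≤ ∑ s', Phat s s' * M := by
          apply Finset.sum_le_sum
          intro t _
          rw [abs_mul, abs_of_nonneg (hPhat s t)]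
          exact mul_le_mul_of_nonneg_left (hM t) (hPhat s t)
      _ = M := by rw [← Finset.sum_mul, hPhatrow s, one_mul]
  have hε : γ * εT / (2 * (1 - γ)) = γ * (εT * c) := by
    rw [hcdef]; field_simp
  rw [key, hε]
  calc |(R s - Rhat s) + γ * (∑ s', (P s s' - Phat s s') * (V s' - c))
        + γ * ∑ s', Phat s s' * (V s' - Vhat s')|
      ≤ |R s - Rhat s| + |γ * (∑ s', (P s s' - Phat s s') * (V s' - c))|
        + |γ * ∑ s', Phat s s' * (V s' - Vhat s')| := by
        exact (abs_add_le _ _).trans (add_le_add_left (abs_add_le _ _) _)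
    _ ≤ εR + γ * (εT * c) + γ * M := by
        have e2 : |γ * (∑ s', (P s s' - Phat s s') * (V s' - c))| ≤ γ * (εT * c) := by
          rw [abs_mul, abs_of_nonneg hγ0]; exact mul_le_mul_of_nonneg_left b2 hγ0
        have e3 : |γ * ∑ s', Phat s s' * (V s' - Vhat s')| ≤ γ * M := by
          rw [abs_mul, abs_of_nonneg hγ0]; exact mul_le_mul_of_nonneg_left b3 hγ0
        exact add_le_add (add_le_add (hRdiff s) e2) e3
end
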